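/- Let k : [0,1] × [-B_ν, B_ν] → ℝ satisfy |k| ≤ k̄ := B_β e^{B_β} pointwise, and let l solve l(x,ν) = k(x,ν) + ∫₀ˣ k(x-y,ν) l(y,ν) dy. Then |l(x,ν)| ≤ k̄ e^{k̄} for all (x,ν) ∈ [0,1] × [-B_ν, B_ν]. -/
import Mathlib


open intervalIntegral Real Set

theorem stmt_9 (Bν Bβ : ℝ) (hBν : 0 < Bν) (hBβ : 0 < Bβ)
    (k l : ℝ → ℝ → ℝ)
    (hkc : Continuous (Function.uncurry k))
    (hlc : Continuous (Function.uncurry l))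
    (hkB : ∀ x ∈ Icc (0:ℝ) 1, ∀ ν ∈ Icc (-Bν) Bν,
      |k x ν| ≤ Bβ * Real.exp Bβ)
    (hl : ∀ x ∈ Icc (0:ℝ) 1, ∀ ν ∈ Icc (-Bν) Bν,
      l x ν = k x ν + ∫ y in (0:ℝ)..x, k (x - y) ν * l y ν) :
    ∀ x ∈ Icc (0:ℝ) 1, ∀ ν ∈ Icc (-Bν) Bν,
      |l x ν| ≤ (Bβ * Real.exp Bβ) * Real.exp (Bβ * Real.exp Bβ) := by
  intro x hx ν hν
  set kb := Bβ * Real.exp Bβ with hkb_def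
  have hkb : 0 < kb := mul_pos hBβ (Real.exp_pos _)
  set g : ℝ → ℝ := fun y => |l y ν| with hg_def
  have hlν : Continuous fun y => l y ν :=
    hlc.comp (continuous_id.prodMk continuous_const)
  have hgc : Continuous g := hlν.abs
  set f : ℝ → ℝ := fun t => ∫ y in (0:ℝ)..t, g y with hf_def
  have hderiv : ∀ t : ℝ, HasDerivAt f (g t) t := fun t =>
    (hgc.integral_hasStrictDerivAt 0 t).hasDerivAt
  have hfc : Continuous f :=
    continuous_iff_continuousAt.2 fun t => (hderiv t).continuousAt
  have hfnn : ∀ t ∈ Icc (0:ℝ) 1, 0 ≤ f t := by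
    intro t ht
    exact intervalIntegral.integral_nonneg ht.1 (fun y _ => abs_nonneg _)
  -- key pointwise bound
  have key : ∀ t ∈ Icc (0:ℝ) 1, g t ≤ kb * f t + kb := by
    intro t ht
    have hkν : Continuous fun y => k (t - y) ν :=
      hkc.comp ((continuous_const.sub continuous_id).prodMk continuous_const)
    have hint1 : IntervalIntegrable (fun y => |k (t - y) ν * l y ν|) MeasureTheory.volume 0 t :=
      ((hkν.mul hlν).abs).intervalIntegrable 0 t
    have hint2 : IntervalIntegrable (fun y => kb * g y) MeasureTheory.volume 0 t :=
      (continuous_const.mul hgc).intervalIntegrable 0 t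
    have habs : |∫ y in (0:ℝ)..t, k (t - y) ν * l y ν| ≤ kb * f t := by
      calc |∫ y in (0:ℝ)..t, k (t - y) ν * l y ν|
          ≤ ∫ y in (0:ℝ)..t, |k (t - y) ν * l y ν| :=
            intervalIntegral.abs_integral_le_integral_abs ht.1
        _ ≤ ∫ y in (0:ℝ)..t, kb * g y := by
            apply intervalIntegral.integral_mono_on ht.1 hint1 hint2
            intro y hy
            rw [abs_mul]
            apply mul_le_mul_of_nonneg_right _ (abs_nonneg _)
            exact hkB _ ⟨by linarith [hy.1, hy.2], by linarith [hy.1, hy.2, ht.2]⟩ ν hν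
        _ = kb * f t := intervalIntegral.integral_const_mul kb g
    calc g t = |k t ν + ∫ y in (0:ℝ)..t, k (t - y) ν * l y ν| := by
          rw [hg_def]; simp only [hl t ht ν hν]
      _ ≤ |k t ν| + |∫ y in (0:ℝ)..t, k (t - y) ν * l y ν| := abs_add_le _ _
      _ ≤ kb + kb * f t := add_le_add (hkB t ht ν hν) habs
      _ = kb * f t + kb := add_comm _ _
  -- Grönwall
  have gron : ∀ t ∈ Icc (0:ℝ) 1, ‖f t‖ ≤ gronwallBound 0 kb kb (t - 0) := by
    apply norm_le_gronwallBound_of_norm_deriv_right_le (f' := g)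
    · exact hfc.continuousOn
    · intro t _; exact (hderiv t).hasDerivWithinAt
    · simp [hf_def]
    · intro t ht
      have h1 := key t ⟨ht.1, le_of_lt ht.2⟩
      have h2 : f t ≤ ‖f t‖ := le_abs_self _
      have := mul_le_mul_of_nonneg_left h2 hkb.le
      calc ‖g t‖ = g t := abs_of_nonneg (abs_nonneg _)
        _ ≤ kb * f t + kb := h1
        _ ≤ kb * ‖f t‖ + kb := by linarith
  have hfx : f x ≤ Real.exp kb - 1 := by
    have := gron x hx
    rw [gronwallBound_of_K_ne_0 hkb.ne'] at this
    simp only [sub_zero, zero_mul, zero_add, div_self hkb.ne', one_mul] at this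
    have h2 : Real.exp (kb * x) - 1 ≤ Real.exp kb - 1 := by
      have : kb * x ≤ kb := by nlinarith [hx.1, hx.2]
      linarith [Real.exp_le_exp.2 this]
    calc f x ≤ ‖f x‖ := le_abs_self _
      _ ≤ Real.exp (kb * x) - 1 := this
      _ ≤ Real.exp kb - 1 := h2
  have := key x hx
  have : g x ≤ kb * (Real.exp kb - 1) + kb := by nlinarith [key x hx]
  calc |l x ν| = g x := rfl
    _ ≤ kb * (Real.exp kb - 1) + kb := this
    _ = kb * Real.exp kb := by ring
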